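/- Let G ≥ 1, A_1, …, A_G > 0 and P_t > 0. Then the maximum over all power allocations (P_1,…,P_G) with P_g ≥ 0 and ∑_{g=1}^G P_g ≤ P_t of the quantity min_{1 ≤ g ≤ G} P_g·A_g / (∑_{j ≠ g} P_j·A_g + 1) equals γ* = 1 / ( (∑_{g=1}^G (1 + 1/(P_t · A_g))) − 1 ), and it is attained at P_g = γ*·(P_t + 1/A_g)/(1 + γ*). -/

import Mathlib

/-- TIN max-min fairness: the maximum over nonnegative power allocations with
total power at most `Pt` of the minimum group SINR equals `γ*`, and it is
attained at the closed-form allocation `Pstar`. -/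
theorem tin_mmf_power_allocation_isGreatest
    (G : ℕ) (hG : 0 < G) (A : Fin G → ℝ) (hA : ∀ g, 0 < A g)
    (Pt : ℝ) (hPt : 0 < Pt)
    (γ : ℝ) (hγ : γ = 1 / ((∑ g, (1 + 1 / (Pt * A g))) - 1))
    (Pstar : Fin G → ℝ) (hPstar : ∀ g, Pstar g = γ * (Pt + 1 / A g) / (1 + γ)) :
    IsGreatest {m : ℝ | ∃ P : Fin G → ℝ, (∀ g, 0 ≤ P g) ∧ (∑ g, P g) ≤ Pt ∧
        m = Finset.univ.inf' ⟨⟨0, hG⟩, Finset.mem_univ _⟩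
          (fun g => P g * A g / ((∑ j ∈ Finset.univ.erase g, P j) * A g + 1))} γ ∧
      Finset.univ.inf' ⟨⟨0, hG⟩, Finset.mem_univ _⟩
        (fun g => Pstar g * A g / ((∑ j ∈ Finset.univ.erase g, Pstar j) * A g + 1)) = γ := by
  have hne : (Finset.univ : Finset (Fin G)).Nonempty := ⟨⟨0, hG⟩, Finset.mem_univ _⟩
  set c : ℝ := ∑ g, 1 / A g with hc
  have hcpos : 0 < c := Finset.sum_pos (fun g _ => one_div_pos.mpr (hA g)) hne
  have hGR : (1 : ℝ) ≤ (G : ℝ) := by exact_mod_cast hG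
  have hden : 0 < ((G : ℝ) - 1) * Pt + c := by nlinarith
  -- value of γ
  have hsumA : (∑ g, (1 + 1 / (Pt * A g))) = (G : ℝ) + c / Pt := by
    rw [Finset.sum_add_distrib]
    have h1 : (∑ _g : Fin G, (1 : ℝ)) = (G : ℝ) := by simp
    have h2 : (∑ g, 1 / (Pt * A g)) = c / Pt := by
      rw [hc, Finset.sum_div]
      refine Finset.sum_congr rfl fun g _ => ?_
      rw [div_div, mul_comm]
    rw [h1, h2]
  have hγ2 : γ * (((G : ℝ) - 1) * Pt + c) = Pt := by
    rw [hγ, hsumA]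
    have h3 : (G : ℝ) + c / Pt - 1 = (((G : ℝ) - 1) * Pt + c) / Pt := by
      field_simp; ring
    rw [h3, one_div_div, div_mul_cancel₀ _ hden.ne']
  have hγpos : 0 < γ := by
    have := hγ2
    nlinarith
  have h1γ : 0 < 1 + γ := by linarith
  -- sum of Pstar equals Pt
  have hPsum : (∑ g, Pstar g) = Pt := by
    have : (∑ g, Pstar g) = (γ * ((G : ℝ) * Pt + c)) / (1 + γ) := by
      simp only [hPstar]
      rw [← Finset.sum_div, ← Finset.mul_sum, Finset.sum_add_distrib]
      simp [hc]
    rw [this, div_eq_iff h1γ.ne']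
    linear_combination hγ2
  -- each SINR at Pstar equals γ
  have hval : ∀ g, Pstar g * A g / ((∑ j ∈ Finset.univ.erase g, Pstar j) * A g + 1) = γ := by
    intro g
    rw [Finset.sum_erase_eq_sub (Finset.mem_univ g), hPsum]
    have hAg := hA g
    have hnum : Pstar g * A g = γ * (Pt * A g + 1) / (1 + γ) := by
      rw [hPstar]; field_simp
    have hdeno : (Pt - Pstar g) * A g + 1 = (Pt * A g + 1) / (1 + γ) := by
      rw [hPstar]; field_simp; ring
    have htpos : 0 < Pt * A g + 1 := by positivity
    have h1 := h1γ.ne'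
    have h2 := htpos.ne'
    rw [hnum, hdeno]
    field_simp
  have hinf : Finset.univ.inf' hne
      (fun g => Pstar g * A g / ((∑ j ∈ Finset.univ.erase g, Pstar j) * A g + 1)) = γ := by
    apply le_antisymm
    · have := Finset.inf'_le
        (fun g => Pstar g * A g / ((∑ j ∈ Finset.univ.erase g, Pstar j) * A g + 1))
        (Finset.mem_univ (⟨0, hG⟩ : Fin G))
      rw [hval ⟨0, hG⟩] at this
      exact this
    · exact Finset.le_inf' _ _ fun g _ => (hval g).ge
  refine ⟨⟨⟨Pstar, fun g => ?_, hPsum.le, hinf.symm⟩, ?_⟩, hinf⟩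
  · rw [hPstar]
    have h1 : 0 < 1 / A g := one_div_pos.mpr (hA g)
    exact div_nonneg (mul_nonneg hγpos.le (by linarith)) h1γ.le
  -- upper bound
  · rintro m ⟨P, hP0, hPle, rfl⟩
    set Sp : ℝ := ∑ g, P g with hSp
    have hSp0 : 0 ≤ Sp := Finset.sum_nonneg fun g _ => hP0 g
    set m := Finset.univ.inf' hne
      (fun g => P g * A g / ((∑ j ∈ Finset.univ.erase g, P j) * A g + 1)) with hm
    have hm0 : 0 ≤ m := by
      refine Finset.le_inf' _ _ fun g _ => ?_
      have hDg : 0 < (∑ j ∈ Finset.univ.erase g, P j) * A g + 1 := by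
        have h0 : 0 ≤ (∑ j ∈ Finset.univ.erase g, P j) :=
          Finset.sum_nonneg fun j _ => hP0 j
        nlinarith [mul_nonneg h0 (hA g).le]
      exact div_nonneg (mul_nonneg (hP0 g) (hA g).le) hDg.le
    have key : ∀ g, m * (Sp - P g) + m * (1 / A g) ≤ P g := by
      intro g
      have hAg := hA g
      have hers : (∑ j ∈ Finset.univ.erase g, P j) = Sp - P g :=
        Finset.sum_erase_eq_sub (Finset.mem_univ g)
      have hDg : 0 < (Sp - P g) * A g + 1 := by
        have h0 : 0 ≤ Sp - P g := by
          rw [← hers]; exact Finset.sum_nonneg fun j _ => hP0 j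
        nlinarith [mul_nonneg h0 hAg.le]
      have hle : m ≤ P g * A g / ((Sp - P g) * A g + 1) := by
        have := Finset.inf'_le
          (fun g => P g * A g / ((∑ j ∈ Finset.univ.erase g, P j) * A g + 1))
          (Finset.mem_univ g)
        rw [hers] at this
        exact this
      have hmul : m * ((Sp - P g) * A g + 1) ≤ P g * A g :=
        (le_div_iff₀ hDg).mp hle
      have := (mul_le_mul_iff_of_pos_right hAg).mp
        (show (m * (Sp - P g) + m * (1 / A g)) * A g ≤ P g * A g by
          calc (m * (Sp - P g) + m * (1 / A g)) * A g
              = m * ((Sp - P g) * A g + 1) := by field_simp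
            _ ≤ P g * A g := hmul)
      exact this
    have hsumkey : (G : ℝ) * (m * Sp) - m * Sp + m * c ≤ Sp := by
      have := Finset.sum_le_sum (s := Finset.univ) (fun g _ => key g)
      rw [Finset.sum_add_distrib] at this
      have e1 : (∑ g : Fin G, m * (Sp - P g)) = (G : ℝ) * (m * Sp) - m * Sp := by
        rw [← Finset.mul_sum, Finset.sum_sub_distrib]
        simp [← hSp, mul_sub, mul_comm]
        ring
      have e2 : (∑ g : Fin G, m * (1 / A g)) = m * c := by
        rw [← Finset.mul_sum, hc]
      rw [e1, e2] at this
      exact this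
    -- from hsumkey, Sp ≤ Pt, derive m ≤ γ
    have hγval : γ = Pt / (((G : ℝ) - 1) * Pt + c) := by
      rw [eq_div_iff hden.ne']; exact hγ2
    rw [hγval, le_div_iff₀ hden]
    by_cases hcase : m * ((G : ℝ) - 1) ≤ 1
    · nlinarith [mul_nonneg (sub_nonneg.2 hPle) (sub_nonneg.2 hcase)]
    · push_neg at hcase
      have hmpos : 0 < m := by nlinarith
      nlinarith [mul_nonneg hSp0 (by linarith : (0:ℝ) ≤ m * ((G : ℝ) - 1) - 1),
        mul_pos hmpos hcpos]
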